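/- Let p and q be coprime positive integers and n a natural number. Let J_{p,q,n} ⊆ ℂ⟦x,y⟧ be the ideal generated by the monomials x^i y^j with p·i + q·j ≥ p·q·n. Then the quotient ℂ⟦x,y⟧/J_{p,q,n} is a finite-dimensional ℂ-vector space and 2 · dim_ℂ (ℂ⟦x,y⟧/J_{p,q,n}) = p·q·n·(n+1) − (p−1)·(q−1)·n, i.e., dim_ℂ (ℂ⟦x,y⟧/J_{p,q,n}) = pq·n(n+1)/2 − (p−1)(q−1)·n/2. -/

import Mathlib

/-- The ideal `J_{p,q,n}` of `ℂ⟦x,y⟧` generated by the monomials `x^i y^j` with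
`p·i + q·j ≥ p·q·n`; this is the `n`-th power of the integral closure `I_{p,q}`
of `⟨x^q, y^p⟩`. -/
noncomputable def Jpqn (p q n : ℕ) : Ideal (MvPowerSeries (Fin 2) ℂ) :=
  Ideal.span {F | ∃ i j : ℕ, p * q * n ≤ p * i + q * j ∧
    F = (MvPowerSeries.X 0 : MvPowerSeries (Fin 2) ℂ) ^ i * (MvPowerSeries.X 1) ^ j}

open MvPowerSeries Finset

noncomputable section

abbrev R2 := MvPowerSeries (Fin 2) ℂ

def mm (i j : ℕ) : Fin 2 →₀ ℕ := Finsupp.single 0 i + Finsupp.single 1 j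

lemma mm_apply0 (i j : ℕ) : mm i j 0 = i := by simp [mm, Finsupp.single_apply]
lemma mm_apply1 (i j : ℕ) : mm i j 1 = j := by simp [mm, Finsupp.single_apply]
lemma eq_mm (d : Fin 2 →₀ ℕ) : d = mm (d 0) (d 1) := by
  ext a; fin_cases a <;> simp [mm, Finsupp.single_apply]
lemma mm_le_iff {i j : ℕ} {d : Fin 2 →₀ ℕ} : mm i j ≤ d ↔ i ≤ d 0 ∧ j ≤ d 1 := by
  rw [Finsupp.le_def]
  constructor
  · intro h; exact ⟨by simpa [mm_apply0] using h 0, by simpa [mm_apply1] using h 1⟩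
  · rintro ⟨h0, h1⟩ s; fin_cases s
    · simpa [mm_apply0] using h0
    · simpa [mm_apply1] using h1
lemma mm_inj {i j i' j' : ℕ} (h : mm i j = mm i' j') : i = i' ∧ j = j' := by
  constructor
  · have := congrArg (fun f => f 0) h; simpa [mm_apply0] using this
  · have := congrArg (fun f => f 1) h; simpa [mm_apply1] using this
lemma X_pow_mul_eq (i j : ℕ) :
    (MvPowerSeries.X 0 : R2) ^ i * (MvPowerSeries.X 1) ^ j = monomial (R := ℂ) (mm i j) 1 := by
  rw [MvPowerSeries.X_pow_eq, MvPowerSeries.X_pow_eq, MvPowerSeries.monomial_mul_monomial,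
    one_mul]; rfl


def Rect (p q n : ℕ) : Finset (ℕ × ℕ) := range (q*n+1) ×ˢ range (p*n+1)
def Tset (p q n : ℕ) : Finset (ℕ × ℕ) := (Rect p q n).filter (fun x => p*x.1 + q*x.2 < p*q*n)

lemma mem_Tset {p q n : ℕ} (hp : 0 < p) (hq : 0 < q) {x : ℕ × ℕ} :
    x ∈ Tset p q n ↔ p*x.1 + q*x.2 < p*q*n := by
  simp only [Tset, Rect, mem_filter, mem_product, mem_range]
  constructor
  · tauto
  · intro h
    have h1 : p*x.1 < p*(q*n) := by rw [← mul_assoc]; omega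
    have h2 : q*x.2 < q*(p*n) := by
      have e : q*(p*n) = p*q*n := by ring
      omega
    have ha1 := Nat.lt_of_mul_lt_mul_left h1
    have ha2 := Nat.lt_of_mul_lt_mul_left h2
    omega

lemma card_count (p q n : ℕ) (hp : 0 < p) (hq : 0 < q) (hpq : Nat.Coprime p q) :
    (2 * (Tset p q n).card : ℤ) = (p : ℤ) * q * n * (n + 1) - ((p : ℤ) - 1) * ((q : ℤ) - 1) * n := by
  classical
  have hRcard : (Rect p q n).card = (q*n+1) * (p*n+1) := by simp [Rect]
  have h1 := Finset.card_filter_add_card_filter_not (s := Rect p q n)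
      (p := fun x => p*x.1 + q*x.2 < p*q*n)
  have h2 := Finset.card_filter_add_card_filter_not
      (s := (Rect p q n).filter (fun x => ¬ (p*x.1 + q*x.2 < p*q*n)))
      (p := fun x => p*x.1 + q*x.2 = p*q*n)
  rw [Finset.filter_filter, Finset.filter_filter] at h2
  set D : Finset (ℕ × ℕ) :=
    (Rect p q n).filter (fun x => ¬ p*x.1 + q*x.2 < p*q*n ∧ p*x.1 + q*x.2 = p*q*n) with hD
  set Tgt : Finset (ℕ × ℕ) :=
    (Rect p q n).filter (fun x => ¬ p*x.1 + q*x.2 < p*q*n ∧ ¬ p*x.1 + q*x.2 = p*q*n) with hTgt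
  have hbij : Tgt.card = (Tset p q n).card := by
    apply Finset.card_bij' (fun x _ => (q*n - x.1, p*n - x.2)) (fun x _ => (q*n - x.1, p*n - x.2))
    · intro a ha
      simp only [hTgt, Rect, mem_filter, mem_product, mem_range] at ha
      obtain ⟨⟨ha1, ha2⟩, ha3, ha4⟩ := ha
      have e1 : p*(q*n - a.1) + p*a.1 = p*(q*n) := by
        rw [← Nat.mul_add, Nat.sub_add_cancel (by omega)]
      have e2 : q*(p*n - a.2) + q*a.2 = q*(p*n) := by
        rw [← Nat.mul_add, Nat.sub_add_cancel (by omega)]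
      have e3 : p*(q*n) = p*q*n := by ring
      have e4 : q*(p*n) = p*q*n := by ring
      rw [mem_Tset hp hq]
      try dsimp only
      omega
    · intro a ha
      rw [mem_Tset hp hq] at ha
      have h1' : p*a.1 < p*(q*n) := by
        have e : p*(q*n) = p*q*n := by rw [mul_assoc]
        omega
      have h2' : q*a.2 < q*(p*n) := by
        have e : q*(p*n) = p*q*n := by ring
        omega
      have ha1 := Nat.lt_of_mul_lt_mul_left h1'
      have ha2 := Nat.lt_of_mul_lt_mul_left h2'
      simp only [hTgt, Rect, mem_filter, mem_product, mem_range]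
      have e1 : p*(q*n - a.1) + p*a.1 = p*(q*n) := by
        rw [← Nat.mul_add, Nat.sub_add_cancel (by omega)]
      have e2 : q*(p*n - a.2) + q*a.2 = q*(p*n) := by
        rw [← Nat.mul_add, Nat.sub_add_cancel (by omega)]
      have e3 : p*(q*n) = p*q*n := by ring
      have e4 : q*(p*n) = p*q*n := by ring
      try dsimp only
      omega
    · intro a ha
      simp only [hTgt, Rect, mem_filter, mem_product, mem_range] at ha
      ext <;> first | omega | (dsimp only; omega)
    · intro a ha
      rw [mem_Tset hp hq] at ha
      have h1' : p*a.1 < p*(q*n) := by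
        have e : p*(q*n) = p*q*n := by rw [mul_assoc]
        omega
      have h2' : q*a.2 < q*(p*n) := by
        have e : q*(p*n) = p*q*n := by ring
        omega
      have ha1 := Nat.lt_of_mul_lt_mul_left h1'
      have ha2 := Nat.lt_of_mul_lt_mul_left h2'
      ext <;> first | omega | (dsimp only; omega)
  have hDcard : D.card = n + 1 := by
    have hDeq : D = (range (n+1)).image (fun t => (q*t, p*(n-t))) := by
      ext x
      simp only [hD, Rect, mem_filter, mem_product, mem_range, mem_image]
      constructor
      · rintro ⟨⟨hx1, hx2⟩, -, h3⟩
        have hdvd : q ∣ p * x.1 := by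
          have hd1 : q ∣ p*x.1 + q*x.2 := by rw [h3]; exact ⟨p*n, by ring⟩
          have := Nat.dvd_sub hd1 (⟨x.2, rfl⟩ : q ∣ q*x.2)
          simpa using this
        obtain ⟨t, ht⟩ := (Nat.Coprime.dvd_of_dvd_mul_left (hpq.symm) (by rwa [mul_comm] at hdvd))
        have htn : t ≤ n := by
          have e1 : p*(q*t) = p*q*t := by ring
          have e2 : p*q*t ≤ p*q*n := by rw [← e1, ← ht]; omega
          exact Nat.le_of_mul_le_mul_left e2 (by positivity)
        refine ⟨t, by omega, ?_⟩
        have e1 : p*(q*t) = p*q*t := by ring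
        have e2 : q*(p*(n-t)) + p*q*t = p*q*n := by
          have h5 : p*(n-t) + p*t = p*n := by rw [← Nat.mul_add, Nat.sub_add_cancel htn]
          have e3 : q*(p*(n-t)) + q*(p*t) = q*(p*n) := by rw [← Nat.mul_add, h5]
          have e4 : q*(p*t) = p*q*t := by ring
          have e5 : q*(p*n) = p*q*n := by ring
          omega
        rw [ht] at h3
        have hx2' : q*x.2 = q*(p*(n-t)) := by omega
        have := Nat.eq_of_mul_eq_mul_left hq hx2'
        ext <;> first | omega | (dsimp only; omega)
      · rintro ⟨t, ht, rfl⟩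
        have e2 : q*(p*(n-t)) + p*q*t = p*q*n := by
          have h5 : p*(n-t) + p*t = p*n := by rw [← Nat.mul_add, Nat.sub_add_cancel (by omega)]
          have e3 : q*(p*(n-t)) + q*(p*t) = q*(p*n) := by rw [← Nat.mul_add, h5]
          have e4 : q*(p*t) = p*q*t := by ring
          have e5 : q*(p*n) = p*q*n := by ring
          omega
        have e1 : p*(q*t) = p*q*t := by ring
        have b1 : q*t ≤ q*n := Nat.mul_le_mul_left q (by omega)
        have b2 : p*(n-t) ≤ p*n := Nat.mul_le_mul_left p (by omega)
        try dsimp only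
        omega
    rw [hDeq, Finset.card_image_of_injOn, Finset.card_range]
    intro a _ b _ hab
    have : q*a = q*b := congrArg Prod.fst hab
    exact Nat.eq_of_mul_eq_mul_left hq this
  have hTT : (Tset p q n).card
      = ((Rect p q n).filter (fun x => p*x.1 + q*x.2 < p*q*n)).card := rfl
  have key : 2 * (Tset p q n).card + (n+1) = (q*n+1) * (p*n+1) := by omega
  have keyZ := congrArg (Nat.cast : ℕ → ℤ) key
  push_cast at keyZ
  linear_combination keyZ

lemma coeff_zero_of_mem (p q n : ℕ) {x : R2} (hx : x ∈ Jpqn p q n)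
    (d : Fin 2 →₀ ℕ) (hd : p * d 0 + q * d 1 < p * q * n) :
    MvPowerSeries.coeff (R := ℂ) d x = 0 := by
  classical
  revert d
  refine Submodule.span_induction ?_ ?_ ?_ ?_ hx
  · rintro g ⟨i, j, hij, rfl⟩ d hd
    rw [X_pow_mul_eq, MvPowerSeries.coeff_monomial]
    split_ifs with h
    · exfalso
      rw [h, mm_apply0, mm_apply1] at hd
      omega
    · rfl
  · intro d _; simp
  · intro x y _ _ hx hy d hd
    rw [map_add, hx d hd, hy d hd, add_zero]
  · intro a x _ hx d hd
    rw [smul_eq_mul, MvPowerSeries.coeff_mul]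
    refine Finset.sum_eq_zero fun pr hpr => ?_
    rw [Finset.HasAntidiagonal.mem_antidiagonal] at hpr
    have h2 : pr.2 ≤ d := hpr ▸ le_add_self
    have : p * pr.2 0 + q * pr.2 1 < p * q * n := by
      have h0 : pr.2 0 ≤ d 0 := h2 0
      have h1 : pr.2 1 ≤ d 1 := h2 1
      have := Nat.mul_le_mul_left p h0
      have := Nat.mul_le_mul_left q h1
      omega
    rw [hx pr.2 this, mul_zero]

lemma mem_Jpqn_of (p q n : ℕ) (hq : 0 < q) (F : R2)
    (hF : ∀ d : Fin 2 →₀ ℕ, p * d 0 + q * d 1 < p * q * n → MvPowerSeries.coeff (R := ℂ) d F = 0) :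
    F ∈ Jpqn p q n := by
  classical
  have hex : ∀ i : ℕ, ∃ j, p * q * n ≤ p * i + q * j := fun i =>
    ⟨p * q * n, by
      have h1 : p * q * n ≤ q * (p * q * n) := Nat.le_mul_of_pos_left _ hq
      omega⟩
  set jm : ℕ → ℕ := fun i => Nat.find (hex i) with hjm
  set A : ℕ → R2 := fun i =>
    ((fun d => if d 0 = 0 then MvPowerSeries.coeff (R := ℂ) (mm i (jm i + d 1)) F else 0) : R2) with hA
  set B : R2 := ((fun d => MvPowerSeries.coeff (R := ℂ) (mm (q * n + d 0) (d 1)) F) : R2) with hB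
  have hdecomp : F = (∑ i ∈ Finset.range (q * n), monomial (R := ℂ) (mm i (jm i)) 1 * A i)
      + monomial (R := ℂ) (mm (q * n) 0) 1 * B := by
    apply MvPowerSeries.ext; intro d
    rw [map_add, map_sum]
    by_cases hd0 : q * n ≤ d 0
    · -- B term gives coeff d F, A terms vanish
      have hB1 : MvPowerSeries.coeff (R := ℂ) d (monomial (R := ℂ) (mm (q * n) 0) 1 * B) =
          MvPowerSeries.coeff (R := ℂ) d F := by
        rw [MvPowerSeries.coeff_monomial_mul, if_pos (mm_le_iff.2 ⟨hd0, Nat.zero_le _⟩), one_mul]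
        show B (d - mm (q*n) 0) = _
        rw [hB]
        have e0 : (d - mm (q*n) 0) 0 = d 0 - q*n := by
          rw [Finsupp.tsub_apply, mm_apply0]
        have e1 : (d - mm (q*n) 0) 1 = d 1 := by
          rw [Finsupp.tsub_apply, mm_apply1, Nat.sub_zero]
        simp only [e0, e1]
        rw [Nat.add_sub_cancel' hd0, ← eq_mm]
      have hA1 : ∀ i ∈ Finset.range (q * n),
          MvPowerSeries.coeff (R := ℂ) d (monomial (R := ℂ) (mm i (jm i)) 1 * A i) = 0 := by
        intro i hi
        rw [Finset.mem_range] at hi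
        rw [MvPowerSeries.coeff_monomial_mul]
        split_ifs with h
        · rw [one_mul]
          show A i (d - mm i (jm i)) = 0
          rw [hA]
          have e0 : (d - mm i (jm i)) 0 = d 0 - i := by
            rw [Finsupp.tsub_apply, mm_apply0]
          simp only [e0]
          rw [if_neg (by omega)]
        · rfl
      rw [Finset.sum_congr rfl hA1, Finset.sum_const_zero, zero_add, hB1]
    · -- B term vanishes, A sum gives coeff d F (or both vanish)
      have hB1 : MvPowerSeries.coeff (R := ℂ) d (monomial (R := ℂ) (mm (q * n) 0) 1 * B) = 0 := by
        rw [MvPowerSeries.coeff_monomial_mul, if_neg (fun h => hd0 (mm_le_iff.1 h).1)]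
      rw [hB1, add_zero]
      have hterm : ∀ i ∈ Finset.range (q * n), i ≠ d 0 →
          MvPowerSeries.coeff (R := ℂ) d (monomial (R := ℂ) (mm i (jm i)) 1 * A i) = 0 := by
        intro i _ hne
        rw [MvPowerSeries.coeff_monomial_mul]
        split_ifs with h
        · rw [one_mul]
          show A i (d - mm i (jm i)) = 0
          have hle := (mm_le_iff.1 h).1
          have e0 : (d - mm i (jm i)) 0 = d 0 - i := by
            rw [Finsupp.tsub_apply, mm_apply0]
          rw [hA]
          simp only [e0]
          rw [if_neg (by omega)]
        · rfl
      rw [Finset.sum_eq_single (d 0) hterm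
        (fun hnotin => absurd (Finset.mem_range.2 (by omega)) hnotin)]
      by_cases hjd : jm (d 0) ≤ d 1
      · have hle : mm (d 0) (jm (d 0)) ≤ d := mm_le_iff.2 ⟨le_rfl, hjd⟩
        rw [MvPowerSeries.coeff_monomial_mul, if_pos hle, one_mul]
        show _ = A (d 0) (d - mm (d 0) (jm (d 0)))
        rw [hA]
        have e0 : (d - mm (d 0) (jm (d 0))) 0 = 0 := by
          rw [Finsupp.tsub_apply, mm_apply0, Nat.sub_self]
        have e1 : (d - mm (d 0) (jm (d 0))) 1 = d 1 - jm (d 0) := by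
          rw [Finsupp.tsub_apply, mm_apply1]
        simp only [e0, e1, if_pos rfl]
        rw [Nat.add_sub_cancel' hjd]
        exact congrArg (fun e => MvPowerSeries.coeff (R := ℂ) e F) (eq_mm d)
      · have hlt : p * d 0 + q * d 1 < p * q * n := by
          by_contra hc
          exact hjd (Nat.find_min' (hex (d 0)) (by omega))
        rw [hF d hlt, MvPowerSeries.coeff_monomial_mul,
          if_neg (fun h => hjd (mm_le_iff.1 h).2)]
  rw [hdecomp]
  refine Submodule.add_mem _ ?_ ?_
  · refine Ideal.sum_mem _ fun i _ => Ideal.mul_mem_right _ _ (Ideal.subset_span ?_)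
    exact ⟨i, jm i, Nat.find_spec (hex i), (X_pow_mul_eq i (jm i)).symm⟩
  · refine Ideal.mul_mem_right _ _ (Ideal.subset_span ?_)
    exact ⟨q * n, 0, by rw [mul_zero, add_zero, mul_assoc], (X_pow_mul_eq (q * n) 0).symm⟩

/-- `ℂ⟦x,y⟧ / J_{p,q,n}` is a finite-dimensional `ℂ`-vector space and
`2 · dim_ℂ (ℂ⟦x,y⟧/J_{p,q,n}) = p·q·n·(n+1) − (p−1)·(q−1)·n`. -/
theorem dim_quotient_Jpqn (p q n : ℕ) (hp : 0 < p) (hq : 0 < q) (hpq : Nat.Coprime p q) :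
    FiniteDimensional ℂ (MvPowerSeries (Fin 2) ℂ ⧸ Jpqn p q n) ∧
    (2 * Module.finrank ℂ (MvPowerSeries (Fin 2) ℂ ⧸ Jpqn p q n) : ℤ) =
      (p : ℤ) * q * n * (n + 1) - ((p : ℤ) - 1) * ((q : ℤ) - 1) * n := by
  classical
  set φ : R2 →ₗ[ℂ] (↥(Tset p q n) → ℂ) :=
    LinearMap.pi (fun t => MvPowerSeries.coeff (R := ℂ) (mm t.1.1 t.1.2)) with hφ
  have hφ_apply : ∀ (F : R2) (t : ↥(Tset p q n)),
      φ F t = MvPowerSeries.coeff (R := ℂ) (mm t.1.1 t.1.2) F := fun F t => rfl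
  have hker : LinearMap.ker φ = (Jpqn p q n).restrictScalars ℂ := by
    ext x
    rw [LinearMap.mem_ker, Submodule.restrictScalars_mem]
    constructor
    · intro hx
      refine mem_Jpqn_of p q n hq x fun d hd => ?_
      have ht : (d 0, d 1) ∈ Tset p q n := (mem_Tset hp hq).2 hd
      have := congrFun hx ⟨(d 0, d 1), ht⟩
      simp only [hφ_apply, Pi.zero_apply] at this ⊢
      rw [eq_mm d]
      exact this
    · intro hx
      funext t
      have ht := (mem_Tset hp hq).1 t.2
      simp only [hφ_apply, Pi.zero_apply]
      exact coeff_zero_of_mem p q n hx _ (by rw [mm_apply0, mm_apply1]; exact ht)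
  have hsurj : Function.Surjective φ := by
    intro g
    refine ⟨∑ t ∈ (Tset p q n).attach, monomial (R := ℂ) (mm t.1.1 t.1.2) (g t), ?_⟩
    funext t'
    rw [hφ_apply, map_sum]
    rw [Finset.sum_eq_single_of_mem t' (Finset.mem_attach _ _)]
    · rw [MvPowerSeries.coeff_monomial, if_pos rfl]
    · intro t _ hne
      rw [MvPowerSeries.coeff_monomial, if_neg]
      intro h
      obtain ⟨h1, h2⟩ := mm_inj h
      exact hne (Subtype.ext (Prod.ext h1 h2)).symm
  have e : (R2 ⧸ Jpqn p q n) ≃ₗ[ℂ] (↥(Tset p q n) → ℂ) :=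
    ((Submodule.Quotient.restrictScalarsEquiv ℂ (Jpqn p q n)).symm.trans
      (Submodule.quotEquivOfEq _ _ hker.symm)).trans (φ.quotKerEquivOfSurjective hsurj)
  have hfd : FiniteDimensional ℂ (R2 ⧸ Jpqn p q n) := Module.Finite.equiv e.symm
  refine ⟨hfd, ?_⟩
  have hfr : Module.finrank ℂ (R2 ⧸ Jpqn p q n) = (Tset p q n).card := by
    rw [e.finrank_eq, Module.finrank_fintype_fun_eq_card, Fintype.card_coe]
  rw [hfr]
  exact_mod_cast card_count p q n hp hq hpq

end
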